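/- In the algebra generated by fermionic variables as above, the operators I¹¹ = −i ψ_a^j ψ^{aj}, I²² = i ψ̄^{aj} ψ̄_a^j, I¹² = −(i/2)[ψ_a^j, ψ̄^{aj}] (summation over a,j) satisfy [I¹¹, I²²] = 2i I¹², [I¹¹, I¹²] = i I¹¹, and [I²², I¹²] = −i I²², i.e. they form an sl(2) triple with relations [I^{ab}, I^{cd}] = −i(ε^{ac}I^{bd} + ε^{bd}I^{ac}). -/

import Mathlib

open Finset

noncomputable def epsLo : Fin 2 → Fin 2 → ℂ := fun a b =>
  if a = 0 ∧ b = 1 then 1 else if a = 1 ∧ b = 0 then -1 else 0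

noncomputable def epsHi : Fin 2 → Fin 2 → ℂ := fun a b => epsLo b a

/-- Lowered fermion `ψ_a^j = ε_{ab} ψ^{bj}`. -/
noncomputable def psiLo {N : ℕ} {A : Type*} [Ring A] [Algebra ℂ A]
    (ψ : Fin 2 → Fin N → A) (a : Fin 2) (j : Fin N) : A :=
  ∑ b, epsLo a b • ψ b j

/-- Raised fermion `ψ̄^{aj} = ε^{ab} ψ̄_b^j`. -/
noncomputable def psibUp {N : ℕ} {A : Type*} [Ring A] [Algebra ℂ A]
    (ψb : Fin 2 → Fin N → A) (a : Fin 2) (j : Fin N) : A :=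
  ∑ b, epsHi a b • ψb b j

/-- `I¹¹ = −i ψ_a^j ψ^{aj}`. -/
noncomputable def I11 {N : ℕ} {A : Type*} [Ring A] [Algebra ℂ A]
    (ψ : Fin 2 → Fin N → A) : A :=
  (-Complex.I) • (∑ j, ∑ a, psiLo ψ a j * ψ a j)

/-- `I²² = i ψ̄^{aj} ψ̄_a^j`. -/
noncomputable def I22 {N : ℕ} {A : Type*} [Ring A] [Algebra ℂ A]
    (ψb : Fin 2 → Fin N → A) : A :=
  Complex.I • (∑ j, ∑ a, psibUp ψb a j * ψb a j)

/-- `I¹² = −(i/2)[ψ_a^j, ψ̄^{aj}]`. -/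
noncomputable def I12 {N : ℕ} {A : Type*} [Ring A] [Algebra ℂ A]
    (ψ ψb : Fin 2 → Fin N → A) : A :=
  (-(Complex.I) / 2) •
    (∑ j, ∑ a, (psiLo ψ a j * psibUp ψb a j - psibUp ψb a j * psiLo ψ a j))

lemma comm4 {A : Type*} [Ring A] [Algebra ℂ A] (a b c d : A) (β γ δ' α : ℂ)
    (hbc : b * c = β • (1:A) - c * b)
    (hac : a * c = γ • (1:A) - c * a)
    (hbd : b * d = δ' • (1:A) - d * b)
    (had : a * d = α • (1:A) - d * a) :
    a * b * (c * d) - c * d * (a * b)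
      = β • (a * d) + γ • (d * b) + δ' • (c * a) - α • (c * b) - (γ * δ') • (1:A) := by
  have h : a * b * (c * d)
      = β • (a * d) + γ • (d * b) + δ' • (c * a) - α • (c * b) - (γ * δ') • (1:A)
        + c * d * (a * b) := by
    calc a * b * (c * d) = a * (b * c) * d := by noncomm_ring
    _ = a * (β • (1:A) - c * b) * d := by rw [hbc]
    _ = β • (a * d) - (a * c) * (b * d) := by noncomm_ring
    _ = β • (a * d) - (γ • (1:A) - c * a) * (b * d) := by rw [hac]
    _ = β • (a * d) - γ • (b * d) + (c * a) * (b * d) := by noncomm_ring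
    _ = β • (a * d) - γ • (δ' • (1:A) - d * b) + (c * a) * (δ' • (1:A) - d * b) := by rw [hbd]
    _ = β • (a * d) + γ • (d * b) + δ' • (c * a) - (γ * δ') • 1 - c * (a * d) * b := by
        simp only [mul_sub, sub_mul, smul_sub, smul_smul, mul_smul_comm, smul_mul_assoc,
          mul_one, mul_assoc]
        abel
    _ = β • (a * d) + γ • (d * b) + δ' • (c * a) - (γ * δ') • (1:A)
        - c * (α • (1:A) - d * a) * b := by rw [had]
    _ = β • (a * d) + γ • (d * b) + δ' • (c * a) - (γ * δ') • 1
        - α • (c * b) + c * d * (a * b) := by noncomm_ring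
    _ = β • (a * d) + γ • (d * b) + δ' • (c * a) - α • (c * b) - (γ * δ') • (1:A)
        + c * d * (a * b) := by abel
  rw [h]; abel

/-- The operators `I¹¹, I²², I¹²` satisfy `[I¹¹,I²²] = 2i I¹²`, `[I¹¹,I¹²] = i I¹¹`
and `[I²²,I¹²] = −i I²²`, i.e. they form an `sl(2)` triple. -/
theorem stmt17 {N : ℕ} {A : Type*} [Ring A] [Algebra ℂ A]
    (ψ ψb : Fin 2 → Fin N → A)
    (h1 : ∀ (a b : Fin 2) (j k : Fin N),
      ψ a j * ψb b k + ψb b k * ψ a j =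
        (if j = k ∧ a = b then (-(1 : ℂ) / 2) else 0) • (1 : A))
    (h2 : ∀ (a b : Fin 2) (j k : Fin N), ψ a j * ψ b k + ψ b k * ψ a j = 0)
    (h3 : ∀ (a b : Fin 2) (j k : Fin N), ψb a j * ψb b k + ψb b k * ψb a j = 0) :
    I11 ψ * I22 ψb - I22 ψb * I11 ψ = (2 * Complex.I) • I12 ψ ψb ∧
    I11 ψ * I12 ψ ψb - I12 ψ ψb * I11 ψ = Complex.I • I11 ψ ∧
    I22 ψb * I12 ψ ψb - I12 ψ ψb * I22 ψb = (-Complex.I) • I22 ψb := by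
  classical
  -- anticommutation relations in subtraction form
  have B2 : ∀ (a b : Fin 2) (j k : Fin N),
      ψ a j * ψ b k = (0:ℂ) • (1:A) - ψ b k * ψ a j := by
    intro a b j k
    rw [zero_smul, zero_sub, eq_neg_iff_add_eq_zero]
    exact h2 a b j k
  have B3 : ∀ (a b : Fin 2) (j k : Fin N),
      ψb a j * ψb b k = (0:ℂ) • (1:A) - ψb b k * ψb a j := by
    intro a b j k
    rw [zero_smul, zero_sub, eq_neg_iff_add_eq_zero]
    exact h3 a b j k
  have A1 : ∀ (a : Fin 2) (j k : Fin N),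
      ψ a j * ψb a k = (if j = k then (-(1:ℂ)/2) else 0) • (1:A) - ψb a k * ψ a j := by
    intro a j k
    have h := h1 a a j k
    simp only [eq_self_iff_true, and_true] at h
    exact eq_sub_of_add_eq h
  have A1' : ∀ (a : Fin 2) (j k : Fin N),
      ψb a j * ψ a k = (if j = k then (-(1:ℂ)/2) else 0) • (1:A) - ψ a k * ψb a j := by
    intro a j k
    have h := h1 a a k j
    simp only [eq_self_iff_true, and_true] at h
    rw [add_comm] at h
    have h' := eq_sub_of_add_eq h
    have hcond : (if k = j then (-(1:ℂ)/2) else 0) = (if j = k then (-(1:ℂ)/2) else 0) := by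
      by_cases hjk : j = k
      · simp [hjk]
      · rw [if_neg (fun h => hjk (Eq.symm h)), if_neg hjk]
    rw [hcond] at h'
    exact h'
  have A2 : ∀ (a b : Fin 2) (j k : Fin N), a ≠ b →
      ψ a j * ψb b k = (0:ℂ) • (1:A) - ψb b k * ψ a j := by
    intro a b j k hab
    rw [zero_smul, zero_sub, eq_neg_iff_add_eq_zero]
    simpa [hab] using h1 a b j k
  have A2' : ∀ (a b : Fin 2) (j k : Fin N), a ≠ b →
      ψb b j * ψ a k = (0:ℂ) • (1:A) - ψ a k * ψb b j := by
    intro a b j k hab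
    rw [zero_smul, zero_sub, eq_neg_iff_add_eq_zero, add_comm]
    simpa [hab] using h1 a b k j
  -- scalar-commutator helpers
  have smulcomm : ∀ (u v : ℂ) (X Y : A),
      (u • X) * (v • Y) - (v • Y) * (u • X) = (u * v) • (X * Y - Y * X) := by
    intro u v X Y
    simp only [smul_mul_assoc, mul_smul_comm, smul_smul, smul_sub, mul_comm u v]
  have smulcomm1 : ∀ (u : ℂ) (X Y : A),
      (u • X) * Y - Y * (u • X) = u • (X * Y - Y * X) := by
    intro u X Y
    simp only [smul_mul_assoc, mul_smul_comm, smul_sub]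
  have expand : ∀ (x X1 X2 X3 X4 : A),
      x * ((X1 - X2) + (X3 - X4)) - ((X1 - X2) + (X3 - X4)) * x
        = ((x * X1 - X1 * x) - (x * X2 - X2 * x))
          + ((x * X3 - X3 * x) - (x * X4 - X4 * x)) := by
    intros; noncomm_ring
  -- pointwise simplifications of the inner sums
  have e2 : ∀ j, (∑ a, psiLo ψ a j * ψ a j) = (2:ℂ) • (ψ 1 j * ψ 0 j) := by
    intro j
    have hB := B2 0 1 j j
    simp only [psiLo, epsLo, Fin.sum_univ_two]
    norm_num
    rw [hB]
    module
  have e3 : ∀ j, (∑ a, psibUp ψb a j * ψb a j) = (2:ℂ) • (ψb 0 j * ψb 1 j) := by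
    intro j
    have hB := B3 1 0 j j
    simp only [psibUp, epsHi, epsLo, Fin.sum_univ_two]
    norm_num
    rw [hB]
    module
  have e4 : ∀ j, (∑ a, (psiLo ψ a j * psibUp ψb a j - psibUp ψb a j * psiLo ψ a j))
      = (ψb 1 j * ψ 1 j - ψ 1 j * ψb 1 j) + (ψb 0 j * ψ 0 j - ψ 0 j * ψb 0 j) := by
    intro j
    simp only [psiLo, psibUp, epsHi, epsLo, Fin.sum_univ_two]
    norm_num
    module
  -- pointwise commutators
  have key1 : ∀ j k : Fin N,
      ((2:ℂ) • (ψ 1 j * ψ 0 j)) * ((2:ℂ) • (ψb 0 k * ψb 1 k))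
        - ((2:ℂ) • (ψb 0 k * ψb 1 k)) * ((2:ℂ) • (ψ 1 j * ψ 0 j))
      = if j = k then
          (ψb 1 j * ψ 1 j - ψ 1 j * ψb 1 j) + (ψb 0 j * ψ 0 j - ψ 0 j * ψb 0 j)
        else 0 := by
    intro j k
    have c1 := comm4 (ψ 1 j) (ψ 0 j) (ψb 0 k) (ψb 1 k) _ _ _ _
      (A1 0 j k) (A2 1 0 j k (by decide)) (A2 0 1 j k (by decide)) (A1 1 j k)
    rw [smulcomm, c1]
    by_cases hjk : j = k
    · subst hjk
      simp only [eq_self_iff_true, if_true]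
      have D0 : ψb 0 j * ψ 0 j = (-(1:ℂ)/2) • (1:A) - ψ 0 j * ψb 0 j := by
        simpa using A1' 0 j j
      have D1 : ψb 1 j * ψ 1 j = (-(1:ℂ)/2) • (1:A) - ψ 1 j * ψb 1 j := by
        simpa using A1' 1 j j
      rw [D0, D1]
      module
    · simp only [if_neg hjk]
      module
  have key2 : ∀ j k : Fin N,
      ((2:ℂ) • (ψ 1 j * ψ 0 j)) *
          ((ψb 1 k * ψ 1 k - ψ 1 k * ψb 1 k) + (ψb 0 k * ψ 0 k - ψ 0 k * ψb 0 k))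
        - ((ψb 1 k * ψ 1 k - ψ 1 k * ψb 1 k) + (ψb 0 k * ψ 0 k - ψ 0 k * ψb 0 k)) *
          ((2:ℂ) • (ψ 1 j * ψ 0 j))
      = if j = k then (-2:ℂ) • ((2:ℂ) • (ψ 1 j * ψ 0 j)) else 0 := by
    intro j k
    have c21 := comm4 (ψ 1 j) (ψ 0 j) (ψ 1 k) (ψb 1 k) _ _ _ _
      (B2 0 1 j k) (B2 1 1 j k) (A2 0 1 j k (by decide)) (A1 1 j k)
    have c22 := comm4 (ψ 1 j) (ψ 0 j) (ψb 1 k) (ψ 1 k) _ _ _ _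
      (A2 0 1 j k (by decide)) (A1 1 j k) (B2 0 1 j k) (B2 1 1 j k)
    have c23 := comm4 (ψ 1 j) (ψ 0 j) (ψ 0 k) (ψb 0 k) _ _ _ _
      (B2 0 0 j k) (B2 1 0 j k) (A1 0 j k) (A2 1 0 j k (by decide))
    have c24 := comm4 (ψ 1 j) (ψ 0 j) (ψb 0 k) (ψ 0 k) _ _ _ _
      (A1 0 j k) (A2 1 0 j k (by decide)) (B2 0 0 j k) (B2 1 0 j k)
    rw [smulcomm1, expand, c21, c22, c23, c24]
    by_cases hjk : j = k
    · subst hjk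
      simp only [eq_self_iff_true, if_true]
      rw [B2 0 1 j j]
      module
    · simp only [if_neg hjk]
      module
  have key3 : ∀ j k : Fin N,
      ((2:ℂ) • (ψb 0 j * ψb 1 j)) *
          ((ψb 1 k * ψ 1 k - ψ 1 k * ψb 1 k) + (ψb 0 k * ψ 0 k - ψ 0 k * ψb 0 k))
        - ((ψb 1 k * ψ 1 k - ψ 1 k * ψb 1 k) + (ψb 0 k * ψ 0 k - ψ 0 k * ψb 0 k)) *
          ((2:ℂ) • (ψb 0 j * ψb 1 j))
      = if j = k then (2:ℂ) • ((2:ℂ) • (ψb 0 j * ψb 1 j)) else 0 := by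
    intro j k
    have c31 := comm4 (ψb 0 j) (ψb 1 j) (ψ 1 k) (ψb 1 k) _ _ _ _
      (A1' 1 j k) (A2' 1 0 j k (by decide)) (B3 1 1 j k) (B3 0 1 j k)
    have c32 := comm4 (ψb 0 j) (ψb 1 j) (ψb 1 k) (ψ 1 k) _ _ _ _
      (B3 1 1 j k) (B3 0 1 j k) (A1' 1 j k) (A2' 1 0 j k (by decide))
    have c33 := comm4 (ψb 0 j) (ψb 1 j) (ψ 0 k) (ψb 0 k) _ _ _ _
      (A2' 0 1 j k (by decide)) (A1' 0 j k) (B3 1 0 j k) (B3 0 0 j k)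
    have c34 := comm4 (ψb 0 j) (ψb 1 j) (ψb 0 k) (ψ 0 k) _ _ _ _
      (B3 1 0 j k) (B3 0 0 j k) (A2' 0 1 j k (by decide)) (A1' 0 j k)
    rw [smulcomm1, expand, c31, c32, c33, c34]
    by_cases hjk : j = k
    · subst hjk
      simp only [eq_self_iff_true, if_true]
      rw [B3 1 0 j j]
      module
    · simp only [if_neg hjk]
      module
  -- sum manipulation
  have sumswap : ∀ f g : Fin N → A,
      (∑ j, f j) * (∑ k, g k) - (∑ k, g k) * (∑ j, f j)
        = ∑ j, ∑ k, (f j * g k - g k * f j) := by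
    intro f g
    rw [Finset.sum_mul_sum, Finset.sum_mul_sum]
    rw [show (∑ k, ∑ j, g k * f j) = ∑ j, ∑ k, g k * f j from Finset.sum_comm]
    rw [← Finset.sum_sub_distrib]
    exact Finset.sum_congr rfl fun j _ => (Finset.sum_sub_distrib _ _).symm
  have diag : ∀ h : Fin N → A,
      (∑ j : Fin N, ∑ k : Fin N, if j = k then h j else 0) = ∑ j, h j := by
    intro h
    refine Finset.sum_congr rfl fun j _ => ?_
    simp
  -- rewriting the generators
  have hI11 : I11 ψ = (-Complex.I) • ∑ j, (2:ℂ) • (ψ 1 j * ψ 0 j) := by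
    unfold I11
    exact congrArg (fun s => (-Complex.I) • s) (Finset.sum_congr rfl fun j _ => e2 j)
  have hI22 : I22 ψb = Complex.I • ∑ j, (2:ℂ) • (ψb 0 j * ψb 1 j) := by
    unfold I22
    exact congrArg (fun s => Complex.I • s) (Finset.sum_congr rfl fun j _ => e3 j)
  have hI12 : I12 ψ ψb = (-(Complex.I)/2) •
      ∑ j, ((ψb 1 j * ψ 1 j - ψ 1 j * ψb 1 j) + (ψb 0 j * ψ 0 j - ψ 0 j * ψb 0 j)) := by
    unfold I12
    exact congrArg (fun s => (-(Complex.I)/2) • s) (Finset.sum_congr rfl fun j _ => e4 j)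
  -- core commutators of the big sums
  have core1 : (∑ j, (2:ℂ) • (ψ 1 j * ψ 0 j)) * (∑ k, (2:ℂ) • (ψb 0 k * ψb 1 k))
      - (∑ k, (2:ℂ) • (ψb 0 k * ψb 1 k)) * (∑ j, (2:ℂ) • (ψ 1 j * ψ 0 j))
      = ∑ j, ((ψb 1 j * ψ 1 j - ψ 1 j * ψb 1 j) + (ψb 0 j * ψ 0 j - ψ 0 j * ψb 0 j)) := by
    rw [sumswap]
    rw [Finset.sum_congr rfl fun j (_ : j ∈ univ) =>
      Finset.sum_congr rfl fun k (_ : k ∈ univ) => key1 j k]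
    exact diag _
  have core2 : (∑ j, (2:ℂ) • (ψ 1 j * ψ 0 j)) *
        (∑ k, ((ψb 1 k * ψ 1 k - ψ 1 k * ψb 1 k) + (ψb 0 k * ψ 0 k - ψ 0 k * ψb 0 k)))
      - (∑ k, ((ψb 1 k * ψ 1 k - ψ 1 k * ψb 1 k) + (ψb 0 k * ψ 0 k - ψ 0 k * ψb 0 k))) *
        (∑ j, (2:ℂ) • (ψ 1 j * ψ 0 j))
      = (-2:ℂ) • ∑ j, (2:ℂ) • (ψ 1 j * ψ 0 j) := by
    rw [sumswap]
    rw [Finset.sum_congr rfl fun j (_ : j ∈ univ) =>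
      Finset.sum_congr rfl fun k (_ : k ∈ univ) => key2 j k]
    rw [diag _, Finset.smul_sum]
  have core3 : (∑ j, (2:ℂ) • (ψb 0 j * ψb 1 j)) *
        (∑ k, ((ψb 1 k * ψ 1 k - ψ 1 k * ψb 1 k) + (ψb 0 k * ψ 0 k - ψ 0 k * ψb 0 k)))
      - (∑ k, ((ψb 1 k * ψ 1 k - ψ 1 k * ψb 1 k) + (ψb 0 k * ψ 0 k - ψ 0 k * ψb 0 k))) *
        (∑ j, (2:ℂ) • (ψb 0 j * ψb 1 j))
      = (2:ℂ) • ∑ j, (2:ℂ) • (ψb 0 j * ψb 1 j) := by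
    rw [sumswap]
    rw [Finset.sum_congr rfl fun j (_ : j ∈ univ) =>
      Finset.sum_congr rfl fun k (_ : k ∈ univ) => key3 j k]
    rw [diag _, Finset.smul_sum]
  refine ⟨?_, ?_, ?_⟩
  · rw [hI11, hI22, hI12, smulcomm, core1, smul_smul]
    congr 1
    ring
  · rw [hI11, hI12, smulcomm, core2, smul_smul, smul_smul]
    congr 1
    ring
  · rw [hI22, hI12, smulcomm, core3, smul_smul, smul_smul]
    congr 1
    ring
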